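/- Every compact closed (rigid) monoidal category possessing finite coproducts has a zero object and finite biproducts. -/

import Mathlib

open CategoryTheory CategoryTheory.Limits CategoryTheory.MonoidalCategory

universe v u

/-- `Y` is a right dual of `X`, witnessed by `η : 𝟙_ C ⟶ Y ⊗ X`, when every morphism
`f : A ⟶ B ⊗ X` factors as `(g ▷ X) ∘ (A ◁ η)` (modulo unitor and associator) for a
unique `g : A ⊗ Y ⟶ B`. -/
def IsRightDual {C : Type u} [Category.{v} C] [MonoidalCategory C]
    (X Y : C) (η : 𝟙_ C ⟶ Y ⊗ X) : Prop :=
  ∀ (A B : C) (f : A ⟶ B ⊗ X), ∃! g : A ⊗ Y ⟶ B,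
    f = (ρ_ A).inv ≫ (A ◁ η) ≫ (α_ A Y X).inv ≫ (g ▷ X)

/-- `Y` is a left dual of `X`, witnessed by `η : 𝟙_ C ⟶ X ⊗ Y`, when every morphism
`f : A ⟶ X ⊗ B` factors as `(X ◁ g) ∘ (η ▷ A)` (modulo unitor and associator) for a
unique `g : Y ⊗ A ⟶ B`. -/
def IsLeftDual {C : Type u} [Category.{v} C] [MonoidalCategory C]
    (X Y : C) (η : 𝟙_ C ⟶ X ⊗ Y) : Prop :=
  ∀ (A B : C) (f : A ⟶ X ⊗ B), ∃! g : Y ⊗ A ⟶ B,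
    f = (λ_ A).inv ≫ (η ▷ A) ≫ (α_ X Y A).hom ≫ (X ◁ g)

noncomputable section HoustonAux

variable {C : Type u} [Category.{v} C] [MonoidalCategory C]

/-- An exact pairing from the universal property of a right dual. -/
def rpair {X Y : C} (η : 𝟙_ C ⟶ Y ⊗ X) (h : IsRightDual X Y η) :
    ExactPairing Y X where
  coevaluation' := η
  evaluation' := (h X (𝟙_ C) (λ_ X).inv).choose
  coevaluation_evaluation' := by
    have hε := (h X (𝟙_ C) (λ_ X).inv).choose_spec.1
    rw [← cancel_epi (ρ_ X).inv]
    simpa using hε.symm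
  evaluation_coevaluation' := by
    set ε := (h X (𝟙_ C) (λ_ X).inv).choose with hdef
    have hε := (h X (𝟙_ C) (λ_ X).inv).choose_spec.1
    have e1 : X ◁ η ≫ (α_ X Y X).inv ≫ ε ▷ X = (ρ_ X).hom ≫ (λ_ X).inv := by
      rw [← cancel_epi (ρ_ X).inv]
      simpa using hε.symm
    have h1 : η = (ρ_ (𝟙_ C)).inv ≫ ((𝟙_ C) ◁ η) ≫ (α_ (𝟙_ C) Y X).inv ≫ ((λ_ Y).hom ▷ X) := by
      monoidal
    have h2 : η = (ρ_ (𝟙_ C)).inv ≫ ((𝟙_ C) ◁ η) ≫ (α_ (𝟙_ C) Y X).inv ≫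
        ((η ▷ Y ≫ (α_ Y X Y).hom ≫ Y ◁ ε ≫ (ρ_ Y).hom) ▷ X) := by
      calc η = 𝟙 _ ⊗≫ η ⊗≫ Y ◁ (X ◁ η ≫ (α_ X Y X).inv ≫ ε ▷ X) ⊗≫ 𝟙 _ := by
            rw [e1]; monoidal
        _ = 𝟙 _ ⊗≫ (η ▷ 𝟙_ C ≫ (Y ⊗ X) ◁ η) ⊗≫ Y ◁ ((α_ X Y X).inv ≫ ε ▷ X) ⊗≫ 𝟙 _ := by
            monoidal
        _ = 𝟙 _ ⊗≫ (𝟙_ C ◁ η ≫ η ▷ (Y ⊗ X)) ⊗≫ Y ◁ ((α_ X Y X).inv ≫ ε ▷ X) ⊗≫ 𝟙 _ := by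
            rw [← whisker_exchange]
        _ = _ := by monoidal
    have := (h (𝟙_ C) Y η).unique h2 h1
    rw [← cancel_mono (ρ_ Y).hom]
    simpa using this

/-- An exact pairing from the universal property of a left dual. -/
def lpair {X Y : C} (η : 𝟙_ C ⟶ X ⊗ Y) (h : IsLeftDual X Y η) :
    ExactPairing X Y where
  coevaluation' := η
  evaluation' := (h X (𝟙_ C) (ρ_ X).inv).choose
  evaluation_coevaluation' := by
    have hε := (h X (𝟙_ C) (ρ_ X).inv).choose_spec.1
    rw [← cancel_epi (λ_ X).inv]
    simpa using hε.symm
  coevaluation_evaluation' := by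
    set ε := (h X (𝟙_ C) (ρ_ X).inv).choose with hdef
    have hε := (h X (𝟙_ C) (ρ_ X).inv).choose_spec.1
    have e1 : η ▷ X ≫ (α_ X Y X).hom ≫ X ◁ ε = (λ_ X).hom ≫ (ρ_ X).inv := by
      rw [← cancel_epi (λ_ X).inv]
      simpa using hε.symm
    have h1 : η = (λ_ (𝟙_ C)).inv ≫ (η ▷ (𝟙_ C)) ≫ (α_ X Y (𝟙_ C)).hom ≫ (X ◁ (ρ_ Y).hom) := by
      monoidal
    have h2 : η = (λ_ (𝟙_ C)).inv ≫ (η ▷ (𝟙_ C)) ≫ (α_ X Y (𝟙_ C)).hom ≫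
        (X ◁ (Y ◁ η ≫ (α_ Y X Y).inv ≫ ε ▷ Y ≫ (λ_ Y).hom)) := by
      calc η = 𝟙 _ ⊗≫ η ⊗≫ (η ▷ X ≫ (α_ X Y X).hom ≫ X ◁ ε) ▷ Y ⊗≫ 𝟙 _ := by
            rw [e1]; monoidal
        _ = 𝟙 _ ⊗≫ (𝟙_ C ◁ η ≫ η ▷ (X ⊗ Y)) ⊗≫ ((α_ X Y X).hom ≫ X ◁ ε) ▷ Y ⊗≫ 𝟙 _ := by
            monoidal
        _ = 𝟙 _ ⊗≫ (η ▷ 𝟙_ C ≫ (X ⊗ Y) ◁ η) ⊗≫ ((α_ X Y X).hom ≫ X ◁ ε) ▷ Y ⊗≫ 𝟙 _ := by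
            rw [whisker_exchange]
        _ = _ := by monoidal
    have := (h (𝟙_ C) Y η).unique h2 h1
    rw [← cancel_mono (λ_ Y).hom]
    simpa using this

/-- Tensoring on the left preserves initial objects. -/
def isInitialWhiskerLeft {Q D O : C} [ExactPairing D Q] (hO : IsInitial O) :
    IsInitial (Q ⊗ O) :=
  IsInitial.ofUniqueHom (fun B => (tensorLeftHomEquiv O D Q B).symm (hO.to _))
    (fun B m => by
      have : (tensorLeftHomEquiv O D Q B) m = hO.to _ := hO.hom_ext _ _
      simpa using congrArg (tensorLeftHomEquiv O D Q B).symm this)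

def isInitialWhiskerRight {Q D O : C} [ExactPairing Q D] (hO : IsInitial O) :
    IsInitial (O ⊗ Q) :=
  IsInitial.ofUniqueHom (fun B => (tensorRightHomEquiv O Q D B).symm (hO.to _))
    (fun B m => by
      have : (tensorRightHomEquiv O Q D B) m = hO.to _ := hO.hom_ext _ _
      simpa using congrArg (tensorRightHomEquiv O Q D B).symm this)

def isTerminalWhiskerLeft {Q D P : C} [ExactPairing Q D] (hP : IsTerminal P) :
    IsTerminal (Q ⊗ P) :=
  IsTerminal.ofUniqueHom (fun U => (tensorLeftHomEquiv U Q D P) (hP.from _))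
    (fun U m => by
      have : (tensorLeftHomEquiv U Q D P).symm m = hP.from _ := hP.hom_ext _ _
      simpa using congrArg (tensorLeftHomEquiv U Q D P) this)

def isTerminalWhiskerRight {Q D P : C} [ExactPairing D Q] (hP : IsTerminal P) :
    IsTerminal (P ⊗ Q) :=
  IsTerminal.ofUniqueHom (fun U => (tensorRightHomEquiv U D Q P) (hP.from _))
    (fun U m => by
      have : (tensorRightHomEquiv U D Q P).symm m = hP.from _ := hP.hom_ext _ _
      simpa using congrArg (tensorRightHomEquiv U D Q P) this)

/-- Tensoring a colimit cofan on the left. -/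
def cofanWhiskerLeft {ι : Type} {g : ι → C} {c : Cofan g} (hc : IsColimit c)
    (Q D : C) [ExactPairing D Q] :
    IsColimit (Cofan.mk (Q ⊗ c.pt) (fun i => Q ◁ c.inj i)) := by
  refine mkCofanColimit _
    (fun t => (tensorLeftHomEquiv c.pt D Q t.pt).symm
      (Cofan.IsColimit.desc hc (fun i => tensorLeftHomEquiv (g i) D Q t.pt (t.inj i)))) ?_ ?_
  · intro t j
    have h1 := tensorLeftHomEquiv_symm_naturality (Y := D) (Y' := Q)
      (f := c.inj j)
      (g := Cofan.IsColimit.desc hc (fun i => tensorLeftHomEquiv (g i) D Q t.pt (t.inj i)))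
    simpa [Cofan.IsColimit.fac] using h1.symm
  · intro t m hm
    have key : ∀ j, c.inj j ≫ (tensorLeftHomEquiv c.pt D Q t.pt) m
        = tensorLeftHomEquiv (g j) D Q t.pt (t.inj j) := by
      intro j
      apply (tensorLeftHomEquiv (g j) D Q t.pt).symm.injective
      rw [tensorLeftHomEquiv_symm_naturality]
      simpa using hm j
    have : (tensorLeftHomEquiv c.pt D Q t.pt) m
        = Cofan.IsColimit.desc hc (fun i => tensorLeftHomEquiv (g i) D Q t.pt (t.inj i)) :=
      Cofan.IsColimit.hom_ext hc _ _ (by simpa [Cofan.IsColimit.fac] using key)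
    simpa using congrArg (tensorLeftHomEquiv c.pt D Q t.pt).symm this

/-- Tensoring a colimit cofan on the right. -/
def cofanWhiskerRight {ι : Type} {g : ι → C} {c : Cofan g} (hc : IsColimit c)
    (Q D : C) [ExactPairing Q D] :
    IsColimit (Cofan.mk (c.pt ⊗ Q) (fun i => c.inj i ▷ Q)) := by
  refine mkCofanColimit _
    (fun t => (tensorRightHomEquiv c.pt Q D t.pt).symm
      (Cofan.IsColimit.desc hc (fun i => tensorRightHomEquiv (g i) Q D t.pt (t.inj i)))) ?_ ?_
  · intro t j
    have h1 := tensorRightHomEquiv_symm_naturality (Y := Q) (Y' := D)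
      (f := c.inj j)
      (g := Cofan.IsColimit.desc hc (fun i => tensorRightHomEquiv (g i) Q D t.pt (t.inj i)))
    simpa [Cofan.IsColimit.fac] using h1.symm
  · intro t m hm
    have key : ∀ j, c.inj j ≫ (tensorRightHomEquiv c.pt Q D t.pt) m
        = tensorRightHomEquiv (g j) Q D t.pt (t.inj j) := by
      intro j
      apply (tensorRightHomEquiv (g j) Q D t.pt).symm.injective
      rw [tensorRightHomEquiv_symm_naturality]
      simpa using hm j
    have : (tensorRightHomEquiv c.pt Q D t.pt) m
        = Cofan.IsColimit.desc hc (fun i => tensorRightHomEquiv (g i) Q D t.pt (t.inj i)) :=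
      Cofan.IsColimit.hom_ext hc _ _ (by simpa [Cofan.IsColimit.fac] using key)
    simpa using congrArg (tensorRightHomEquiv c.pt Q D t.pt).symm this

/-- Planar trace used to sum a finite family of morphisms. -/
def trS {V W X Y : C} (φ : 𝟙_ C ⟶ W ⊗ V) (ψ : W ⊗ V ⟶ 𝟙_ C) (d : V ⊗ X ⟶ V ⊗ Y) :
    X ⟶ Y :=
  (λ_ X).inv ≫ φ ▷ X ≫ (α_ W V X).hom ≫ W ◁ d ≫ (α_ W V Y).inv ≫ ψ ▷ Y ≫ (λ_ Y).hom

lemma trS_comp {V W X Y Y' : C} (φ : 𝟙_ C ⟶ W ⊗ V) (ψ : W ⊗ V ⟶ 𝟙_ C)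
    (d : V ⊗ X ⟶ V ⊗ Y) (b : Y ⟶ Y') :
    trS φ ψ d ≫ b = trS φ ψ (d ≫ V ◁ b) :=
  calc trS φ ψ d ≫ b
      = 𝟙 _ ⊗≫ φ ▷ X ⊗≫ W ◁ d ⊗≫ (ψ ▷ Y ≫ 𝟙_ C ◁ b) ⊗≫ 𝟙 _ := by
        simp only [trS, Category.assoc]; monoidal
    _ = 𝟙 _ ⊗≫ φ ▷ X ⊗≫ W ◁ d ⊗≫ ((W ⊗ V) ◁ b ≫ ψ ▷ Y') ⊗≫ 𝟙 _ := by
        rw [← whisker_exchange]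
    _ = trS φ ψ (d ≫ V ◁ b) := by
        simp only [trS, Category.assoc]; monoidal

lemma comp_trS {V W X X' Y : C} (φ : 𝟙_ C ⟶ W ⊗ V) (ψ : W ⊗ V ⟶ 𝟙_ C)
    (d : V ⊗ X ⟶ V ⊗ Y) (a : X' ⟶ X) :
    a ≫ trS φ ψ d = trS φ ψ (V ◁ a ≫ d) :=
  calc a ≫ trS φ ψ d
      = 𝟙 _ ⊗≫ (𝟙_ C ◁ a ≫ φ ▷ X) ⊗≫ W ◁ d ⊗≫ ψ ▷ Y ⊗≫ 𝟙 _ := by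
        simp only [trS, Category.assoc]; monoidal
    _ = 𝟙 _ ⊗≫ (φ ▷ X' ≫ (W ⊗ V) ◁ a) ⊗≫ W ◁ d ⊗≫ ψ ▷ Y ⊗≫ 𝟙 _ := by
        rw [whisker_exchange]
    _ = trS φ ψ (V ◁ a ≫ d) := by
        simp only [trS, Category.assoc]; monoidal

lemma trS_whiskerRight {V W X : C} (φ : 𝟙_ C ⟶ W ⊗ V) (ψ : W ⊗ V ⟶ 𝟙_ C) (q : V ⟶ V) :
    trS φ ψ (q ▷ X) = (λ_ X).inv ≫ (φ ≫ W ◁ q ≫ ψ) ▷ X ≫ (λ_ X).hom := by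
  simp only [trS, Category.assoc]; monoidal

lemma coev_pi {V W : C} [ExactPairing W V] (u : 𝟙_ C ⟶ V) :
    η_ W V ≫ ((λ_ W).inv ≫ u ▷ W ≫ ε_ W V) ▷ V ≫ (λ_ V).hom = u :=
  calc η_ W V ≫ ((λ_ W).inv ≫ u ▷ W ≫ ε_ W V) ▷ V ≫ (λ_ V).hom
      = 𝟙 _ ⊗≫ (𝟙_ C ◁ η_ W V ≫ u ▷ (W ⊗ V)) ⊗≫ ε_ W V ▷ V ⊗≫ 𝟙 _ := by monoidal
    _ = 𝟙 _ ⊗≫ (u ▷ 𝟙_ C ≫ V ◁ η_ W V) ⊗≫ ε_ W V ▷ V ⊗≫ 𝟙 _ := by rw [whisker_exchange]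
    _ = 𝟙 _ ⊗≫ u ⊗≫ (V ◁ η_ W V ≫ (α_ V W V).inv ≫ ε_ W V ▷ V) ⊗≫ 𝟙 _ := by monoidal
    _ = u := by rw [ExactPairing.coevaluation_evaluation]; monoidal

end HoustonAux

/-- **Houston's theorem.** Every compact closed (rigid) monoidal category — one in which
every object has both a left and a right dual — possessing finite coproducts has a zero
object and finite biproducts: there is an object `Z` that is both initial and terminal,
and every finite family of objects admits a coproduct cocone whose induced projections
(`inj k ≫ p k = 𝟙`, and `inj i ≫ p k` the zero morphism through `Z` for `i ≠ k`) form a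
product cone. -/
theorem compactClosed_hasBiproducts {C : Type u} [Category.{v} C] [MonoidalCategory C]
    [HasFiniteCoproducts C]
    (hR : ∀ X : C, ∃ (Y : C) (η : 𝟙_ C ⟶ Y ⊗ X), IsRightDual X Y η)
    (hL : ∀ X : C, ∃ (Y : C) (η : 𝟙_ C ⟶ X ⊗ Y), IsLeftDual X Y η) :
    ∃ (Z : C) (hZi : IsInitial Z) (hZt : IsTerminal Z),
      ∀ (ι : Type) (_ : Finite ι) (f : ι → C),
        ∃ (A : C) (inj : ∀ i, f i ⟶ A) (p : ∀ k, A ⟶ f k),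
          Nonempty (IsColimit (Cofan.mk A inj)) ∧
          (∀ k, inj k ≫ p k = 𝟙 (f k)) ∧
          (∀ i k, i ≠ k → inj i ≫ p k = hZt.from (f i) ≫ hZi.to (f k)) ∧
          Nonempty (IsLimit (Fan.mk A p)) := by
  classical
  choose R ηR hRd using hR
  choose L ηL hLd using hL
  have rp : ∀ X : C, ExactPairing (R X) X := fun X => rpair (ηR X) (hRd X)
  have lp : ∀ X : C, ExactPairing X (L X) := fun X => lpair (ηL X) (hLd X)
  -- the zero object
  have hZi : IsInitial (⊥_ C) := initialIsInitial
  have tzero : ∀ A : C, IsInitial (A ⊗ (⊥_ C)) := fun A =>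
    letI := rp A; isInitialWhiskerLeft (D := R A) hZi
  have zerot : ∀ A : C, IsInitial ((⊥_ C) ⊗ A) := fun A =>
    letI := lp A; isInitialWhiskerRight (D := L A) hZi
  have hZt : IsTerminal (⊥_ C) := by
    refine IsTerminal.ofUniqueHom (fun A => (ρ_ A).inv ≫
      A ◁ (ηR (⊥_ C) ≫ (tzero (R (⊥_ C))).to (⊥_ C)) ≫ (tzero A).to (⊥_ C)) ?_
    intro A m
    set t : 𝟙_ C ⟶ (⊥_ C) := ηR (⊥_ C) ≫ (tzero (R (⊥_ C))).to (⊥_ C) with ht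
    have h1 : m = (ρ_ A).inv ≫ m ▷ (𝟙_ C) ≫ (ρ_ (⊥_ C)).hom := by simp
    have h2 : A ◁ t ≫ m ▷ (⊥_ C) = m ▷ (𝟙_ C) ≫ (⊥_ C) ◁ t := whisker_exchange m t
    have e1 : ((⊥_ C) ◁ t) ≫ (zerot (⊥_ C)).to ((⊥_ C) ⊗ 𝟙_ C) = 𝟙 _ :=
      (zerot (𝟙_ C)).hom_ext _ _
    have h3 : m ▷ (𝟙_ C) = A ◁ t ≫ m ▷ (⊥_ C) ≫ (zerot (⊥_ C)).to ((⊥_ C) ⊗ 𝟙_ C) := by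
      rw [← Category.assoc, h2, Category.assoc, e1, Category.comp_id]
    have h4 : m ▷ (⊥_ C) ≫ (zerot (⊥_ C)).to ((⊥_ C) ⊗ 𝟙_ C) ≫ (ρ_ (⊥_ C)).hom
        = (tzero A).to (⊥_ C) := (tzero A).hom_ext _ _
    calc m = (ρ_ A).inv ≫ m ▷ (𝟙_ C) ≫ (ρ_ (⊥_ C)).hom := h1
      _ = (ρ_ A).inv ≫ A ◁ t ≫ (m ▷ (⊥_ C) ≫ (zerot (⊥_ C)).to ((⊥_ C) ⊗ 𝟙_ C)
            ≫ (ρ_ (⊥_ C)).hom) := by rw [h3]; simp only [Category.assoc]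
      _ = (ρ_ A).inv ≫ A ◁ t ≫ (tzero A).to (⊥_ C) := by rw [h4]
  refine ⟨⊥_ C, hZi, hZt, ?_⟩
  intro ι hfin f
  haveI := hfin
  -- zero morphisms
  let zm : ∀ (X Y : C), X ⟶ Y := fun X Y => hZt.from X ≫ hZi.to Y
  have comp_zm : ∀ {X X' Y : C} (a : X ⟶ X'), a ≫ zm X' Y = zm X Y := by
    intro X X' Y a
    show a ≫ hZt.from X' ≫ hZi.to Y = hZt.from X ≫ hZi.to Y
    rw [← Category.assoc]
    congr 1
    exact hZt.hom_ext _ _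
  have zm_comp : ∀ {X Y Y' : C} (b : Y ⟶ Y'), zm X Y ≫ b = zm X Y' := by
    intro X Y Y' b
    show (hZt.from X ≫ hZi.to Y) ≫ b = hZt.from X ≫ hZi.to Y'
    rw [Category.assoc]
    congr 1
    exact hZi.hom_ext _ _
  have zfac : ∀ {X Y P : C} (hPi : IsInitial P) (hPt : IsTerminal P)
      (u : X ⟶ P) (v : P ⟶ Y), u ≫ v = zm X Y := by
    intro X Y P hPi hPt u v
    have hu : u = hPt.from X := hPt.hom_ext _ _
    have hv : v = hPi.to (⊥_ C) ≫ hZi.to Y := hPi.hom_ext _ _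
    rw [hu, hv, ← Category.assoc]
    show (hPt.from X ≫ hPi.to (⊥_ C)) ≫ _ = hZt.from X ≫ _
    congr 1
    exact hZt.hom_ext _ _
  have zm_whiskerRight : ∀ (P Q X : C), (zm P Q) ▷ X = zm (P ⊗ X) (Q ⊗ X) := by
    intro P Q X
    show (hZt.from P ≫ hZi.to Q) ▷ X = _
    rw [comp_whiskerRight]
    exact zfac (zerot X) (letI := rp X; isTerminalWhiskerRight (D := R X) hZt) _ _
  have zm_whiskerLeft : ∀ (Q X Y : C), Q ◁ (zm X Y) = zm (Q ⊗ X) (Q ⊗ Y) := by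
    intro Q X Y
    show Q ◁ (hZt.from X ≫ hZi.to Y) = _
    rw [MonoidalCategory.whiskerLeft_comp]
    exact zfac (tzero Q) (letI := lp Q; isTerminalWhiskerLeft (D := L Q) hZt) _ _
  -- the coproduct and the auxiliary objects
  let A := ∐ f
  let inj : ∀ i, f i ⟶ A := fun i => Sigma.ι f i
  have cA : IsColimit (Cofan.mk A inj) := coproductIsCoproduct f
  let V := ∐ (fun _ : ι => 𝟙_ C)
  let ev : ∀ _ : ι, 𝟙_ C ⟶ V := fun j => Sigma.ι (fun _ : ι => 𝟙_ C) j
  have cV : IsColimit (Cofan.mk V ev) := coproductIsCoproduct _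
  let W := R V
  letI : ExactPairing W V := rp V
  let π : ι → (W ⟶ 𝟙_ C) := fun k => (λ_ W).inv ≫ ev k ▷ W ≫ ε_ W V
  let φ : 𝟙_ C ⟶ W ⊗ V := η_ W V
  have hφ : ∀ k, φ ≫ (π k) ▷ V ≫ (λ_ V).hom = ev k := fun k => coev_pi (ev k)
  letI : ExactPairing (R W) W := rp W
  have cWV : IsColimit (Cofan.mk (W ⊗ V) (fun j => W ◁ ev j)) :=
    cofanWhiskerLeft cV W (R W)
  let ψ : W ⊗ V ⟶ 𝟙_ C := Cofan.IsColimit.desc cWV (fun j => (ρ_ W).hom ≫ π j)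
  have hψ : ∀ k, (W ◁ ev k) ≫ ψ = (ρ_ W).hom ≫ π k := fun k => Cofan.IsColimit.fac cWV _ k
  have cVX : ∀ X : C, IsColimit (Cofan.mk (V ⊗ X) (fun j => ev j ▷ X)) := fun X =>
    letI := lp X; cofanWhiskerRight cV X (L X)
  let Dm : ∀ {X Y : C}, (∀ _ : ι, X ⟶ Y) → (V ⊗ X ⟶ V ⊗ Y) := fun {X Y} m =>
    Cofan.IsColimit.desc (cVX X) (fun i => 𝟙_ C ◁ m i ≫ ev i ▷ Y)
  have hD : ∀ {X Y : C} (m : ∀ _ : ι, X ⟶ Y) (i : ι),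
      (ev i ▷ X) ≫ Dm m = 𝟙_ C ◁ m i ≫ ev i ▷ Y := fun m i => Cofan.IsColimit.fac (cVX _) _ i
  let S : ∀ {X Y : C}, (∀ _ : ι, X ⟶ Y) → (X ⟶ Y) := fun {X Y} m => trS φ ψ (Dm m)
  -- distributivity of the trace-sum
  have sum_comp : ∀ {X Y Y' : C} (m : ∀ _ : ι, X ⟶ Y) (b : Y ⟶ Y'),
      S m ≫ b = S (fun i => m i ≫ b) := by
    intro X Y Y' m b
    show trS φ ψ (Dm m) ≫ b = trS φ ψ (Dm fun i => m i ≫ b)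
    rw [trS_comp]
    congr 1
    refine Cofan.IsColimit.hom_ext (cVX X) _ _ (fun i => ?_)
    show ev i ▷ X ≫ Dm m ≫ V ◁ b = ev i ▷ X ≫ Dm (fun i => m i ≫ b)
    rw [← Category.assoc, hD m i, Category.assoc, ← whisker_exchange,
      hD (fun i => m i ≫ b) i, ← Category.assoc, ← MonoidalCategory.whiskerLeft_comp]
  have comp_sum : ∀ {X X' Y : C} (m : ∀ _ : ι, X ⟶ Y) (a : X' ⟶ X),
      a ≫ S m = S (fun i => a ≫ m i) := by
    intro X X' Y m a
    show a ≫ trS φ ψ (Dm m) = trS φ ψ (Dm fun i => a ≫ m i)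
    rw [comp_trS]
    congr 1
    refine Cofan.IsColimit.hom_ext (cVX X') _ _ (fun i => ?_)
    show ev i ▷ X' ≫ V ◁ a ≫ Dm m = ev i ▷ X' ≫ Dm (fun i => a ≫ m i)
    rw [← Category.assoc, ← whisker_exchange, Category.assoc, hD m i,
      hD (fun i => a ≫ m i) i, ← Category.assoc, ← MonoidalCategory.whiskerLeft_comp]
  -- the delta family sums to the identity
  have sum_delta : ∀ (X : C) (k : ι),
      S (fun i => if i = k then 𝟙 X else zm X X) = 𝟙 X := by
    intro X k
    let p' : V ⟶ 𝟙_ C :=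
      Cofan.IsColimit.desc cV (fun j => if j = k then 𝟙 (𝟙_ C) else zm (𝟙_ C) (𝟙_ C))
    have hp' : ∀ j, ev j ≫ p' = if j = k then 𝟙 (𝟙_ C) else zm (𝟙_ C) (𝟙_ C) := fun j =>
      Cofan.IsColimit.fac cV _ j
    have hDn : Dm (fun i => if i = k then 𝟙 X else zm X X) = (p' ≫ ev k) ▷ X := by
      refine Cofan.IsColimit.hom_ext (cVX X) _ _ (fun j => ?_)
      show ev j ▷ X ≫ Dm (fun i => if i = k then 𝟙 X else zm X X)
          = ev j ▷ X ≫ (p' ≫ ev k) ▷ X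
      rw [hD (fun i => if i = k then 𝟙 X else zm X X) j, ← comp_whiskerRight,
        ← Category.assoc, hp' j]
      by_cases hj : j = k
      · subst hj
        simp
      · rw [if_neg hj, if_neg hj, zm_whiskerLeft, zm_comp, zm_comp, zm_whiskerRight]
    show trS φ ψ (Dm fun i => if i = k then 𝟙 X else zm X X) = 𝟙 X
    rw [hDn, trS_whiskerRight]
    have hscalar : φ ≫ W ◁ (p' ≫ ev k) ≫ ψ = 𝟙 (𝟙_ C) := by
      rw [MonoidalCategory.whiskerLeft_comp, Category.assoc, hψ k]
      have e2 : (ρ_ W).hom ≫ π k = π k ▷ 𝟙_ C ≫ (ρ_ (𝟙_ C)).hom :=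
        (rightUnitor_naturality (π k)).symm
      rw [e2, ← Category.assoc (W ◁ p'), whisker_exchange, ← unitors_equal]
      simp only [Category.assoc]
      have e3 : 𝟙_ C ◁ p' ≫ (λ_ (𝟙_ C)).hom = (λ_ V).hom ≫ p' := leftUnitor_naturality p'
      rw [e3]
      have e4 : φ ≫ π k ▷ V ≫ (λ_ V).hom ≫ p' = (φ ≫ π k ▷ V ≫ (λ_ V).hom) ≫ p' := by
        simp only [Category.assoc]
      rw [e4, hφ k, hp' k, if_pos rfl]
    rw [hscalar]
    simp
  have sum_single : ∀ {X Y : C} (g0 : X ⟶ Y) (k : ι),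
      S (fun i => if i = k then g0 else zm X Y) = g0 := by
    intro X Y g0 k
    have : (fun i => if i = k then g0 else zm X Y)
        = (fun i => (if i = k then 𝟙 X else zm X X) ≫ g0) := by
      funext i
      by_cases hi : i = k
      · simp [hi]
      · rw [if_neg hi, if_neg hi, zm_comp]
    rw [this, ← sum_comp, sum_delta]
    exact Category.id_comp g0
  -- the projections
  let dd : ∀ i k : ι, f i ⟶ f k := fun i k =>
    if h : i = k then eqToHom (congrArg f h) else zm (f i) (f k)
  let p : ∀ k, A ⟶ f k := fun k => Cofan.IsColimit.desc cA (fun i => dd i k)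
  have hp : ∀ i k, inj i ≫ p k = dd i k := fun i k => Cofan.IsColimit.fac cA _ i
  refine ⟨A, inj, p, ⟨cA⟩, ?_, ?_, ?_⟩
  · intro k
    rw [hp]
    simp [dd]
  · intro i k hik
    rw [hp]
    show dd i k = hZt.from (f i) ≫ hZi.to (f k)
    simp only [dd, dif_neg hik]
    rfl
  · refine ⟨mkFanLimit _ (fun s => S (fun i => s.proj i ≫ inj i)) ?_ ?_⟩
    · intro s k
      show S (fun i => s.proj i ≫ inj i) ≫ p k = s.proj k
      rw [sum_comp]
      have : (fun i => (s.proj i ≫ inj i) ≫ p k)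
          = (fun i => if i = k then s.proj k else zm s.pt (f k)) := by
        funext i
        rw [Category.assoc, hp]
        by_cases hi : i = k
        · subst hi
          simp [dd]
        · rw [if_neg hi]
          show s.proj i ≫ dd i k = _
          simp only [dd, dif_neg hi]
          rw [comp_zm]
      rw [this, sum_single]
    · intro s m hm
      show m = S (fun i => s.proj i ≫ inj i)
      have idA : S (fun i => p i ≫ inj i) = 𝟙 A := by
        refine Cofan.IsColimit.hom_ext cA _ _ (fun j => ?_)
        show inj j ≫ S (fun i => p i ≫ inj i) = inj j ≫ 𝟙 A
        rw [comp_sum, Category.comp_id]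
        have : (fun i => inj j ≫ p i ≫ inj i)
            = (fun i => if i = j then inj j else zm (f j) A) := by
          funext i
          rw [← Category.assoc, hp]
          by_cases hi : i = j
          · subst hi
            simp [dd]
          · rw [if_neg hi]
            show dd j i ≫ inj i = _
            have : ¬ (j = i) := fun h => hi h.symm
            simp only [dd, dif_neg this]
            rw [zm_comp]
        rw [this, sum_single]
      calc m = m ≫ 𝟙 A := (Category.comp_id m).symm
        _ = m ≫ S (fun i => p i ≫ inj i) := congrArg (fun t => m ≫ t) idA.symm
        _ = S (fun i => m ≫ p i ≫ inj i) := comp_sum _ _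
        _ = S (fun i => s.proj i ≫ inj i) := by
            congr 1
            funext i
            rw [← Category.assoc]
            congr 1
            exact hm i
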